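/- Let X be a non-redundant allocation. Then X admits a blocking pair if and only if there exist a doctor d and a hospital h such that Δ_h(X_h, d) = 1 and d strictly prefers h to X(d). -/

import Mathlib

open Finset

/-- A matroid rank function on subsets of a finite ground set. -/
def IsMRF {α : Type*} [DecidableEq α] (v : Finset α → ℤ) : Prop :=
  v ∅ = 0 ∧
  (∀ (S : Finset α) (d : α), d ∉ S →
    v (insert d S) - v S = 0 ∨ v (insert d S) - v S = 1) ∧
  (∀ (S T : Finset α) (d : α), S ⊆ T → d ∉ T →
    v (insert d T) - v T ≤ v (insert d S) - v S)

/-- The bundle of doctors assigned to hospital `h` under allocation `X`. -/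
def bundle {n m : ℕ} (X : Fin m → Option (Fin n)) (h : Fin n) : Finset (Fin m) :=
  Finset.univ.filter (fun d => X d = some h)

/-- An allocation is non-redundant if every hospital's bundle is independent. -/
def NonRedundant {n m : ℕ} (v : Fin n → Finset (Fin m) → ℤ)
    (X : Fin m → Option (Fin n)) : Prop :=
  ∀ h, v h (bundle X h) = (bundle X h).card

/-- Hospital utilitarian welfare. -/
def USW {n m : ℕ} (v : Fin n → Finset (Fin m) → ℤ) (X : Fin m → Option (Fin n)) : ℤ :=
  ∑ h, v h (bundle X h)

/-- Doctor `d` strictly prefers the first outcome to the second; every hospital is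
strictly preferred to being unallocated (`none`). -/
def OptStrictPref {n m : ℕ} (P : Fin m → Fin n → Fin n → Prop) (d : Fin m) :
    Option (Fin n) → Option (Fin n) → Prop
  | some h, some h' => P d h h'
  | some _, none => True
  | none, _ => False

/-- `(h, S)` is a blocking pair for `X`. -/
def IsBlockingPair {n m : ℕ} (v : Fin n → Finset (Fin m) → ℤ)
    (P : Fin m → Fin n → Fin n → Prop) (X : Fin m → Option (Fin n))
    (h : Fin n) (S : Finset (Fin m)) : Prop :=
  v h S = S.card ∧ v h (bundle X h) < v h S ∧
    ∀ d ∈ S, X d = some h ∨ OptStrictPref P d (some h) (X d)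

/-- An allocation is stable if it is non-redundant and admits no blocking pair. -/
def Stable {n m : ℕ} (v : Fin n → Finset (Fin m) → ℤ)
    (P : Fin m → Fin n → Fin n → Prop) (X : Fin m → Option (Fin n)) : Prop :=
  NonRedundant v X ∧ ¬ ∃ h S, IsBlockingPair v P X h S

lemma mrf_le_insert {α : Type*} [DecidableEq α] {v : Finset α → ℤ} (hv : IsMRF v)
    (S : Finset α) (d : α) (hd : d ∉ S) : v S ≤ v (insert d S) := by
  rcases hv.2.1 S d hd with h | h <;> linarith

lemma mrf_mono_aux {α : Type*} [DecidableEq α] {v : Finset α → ℤ} (hv : IsMRF v) :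
    ∀ k (S T : Finset α), S ⊆ T → (T \ S).card = k → v S ≤ v T := by
  intro k
  induction k with
  | zero =>
    intro S T hST hc
    have h1 : T \ S = ∅ := Finset.card_eq_zero.mp hc
    have h2 : T = S :=
      Finset.Subset.antisymm (Finset.sdiff_eq_empty_iff_subset.mp h1) hST
    simp [h2]
  | succ k ih =>
    intro S T hST hc
    obtain ⟨d, hd⟩ := Finset.card_pos.mp (by omega : 0 < (T \ S).card)
    obtain ⟨hdT, hdS⟩ := Finset.mem_sdiff.mp hd
    have hsub : insert d S ⊆ T := Finset.insert_subset hdT hST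
    have hcard : (T \ insert d S).card = k := by
      rw [Finset.sdiff_insert, Finset.card_erase_of_mem hd, hc]; omega
    exact le_trans (mrf_le_insert hv S d hdS) (ih (insert d S) T hsub hcard)

lemma mrf_exchange {α : Type*} [DecidableEq α] {v : Finset α → ℤ} (hv : IsMRF v) :
    ∀ k (B C : Finset α), B ⊆ C → (C \ B).card = k → v B < v C →
      ∃ d ∈ C \ B, v (insert d B) - v B = 1 := by
  intro k
  induction k with
  | zero =>
    intro B C hBC hc hlt
    have h1 : C \ B = ∅ := Finset.card_eq_zero.mp hc
    have h2 : C = B :=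
      Finset.Subset.antisymm (Finset.sdiff_eq_empty_iff_subset.mp h1) hBC
    rw [h2] at hlt; exact absurd hlt (lt_irrefl _)
  | succ k ih =>
    intro B C hBC hc hlt
    obtain ⟨d, hd⟩ := Finset.card_pos.mp (by omega : 0 < (C \ B).card)
    obtain ⟨hdC, hdB⟩ := Finset.mem_sdiff.mp hd
    rcases hv.2.1 B d hdB with h0 | h1
    · have hsub : insert d B ⊆ C := Finset.insert_subset hdC hBC
      have hcard : (C \ insert d B).card = k := by
        rw [Finset.sdiff_insert, Finset.card_erase_of_mem hd, hc]; omega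
      have hlt' : v (insert d B) < v C := by linarith
      obtain ⟨d', hd', hΔ⟩ := ih (insert d B) C hsub hcard hlt'
      obtain ⟨hd'C, hd'B⟩ := Finset.mem_sdiff.mp hd'
      have hd'notB : d' ∉ B := fun hmem => hd'B (Finset.mem_insert_of_mem hmem)
      have hge : v (insert d' (insert d B)) - v (insert d B) ≤
          v (insert d' B) - v B :=
        hv.2.2 B (insert d B) d' (Finset.subset_insert d B) hd'B
      have hle : v (insert d' B) - v B = 0 ∨ v (insert d' B) - v B = 1 :=
        hv.2.1 B d' hd'notB
      refine ⟨d', Finset.mem_sdiff.mpr ⟨hd'C, hd'notB⟩, ?_⟩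
      rcases hle with h | h
      · linarith
      · exact h
    · exact ⟨d, hd, h1⟩

/-- Observation 2.3: for a non-redundant allocation `X`, a blocking pair exists iff
there are a doctor `d` and a hospital `h` with `Δ_h(X_h, d) = 1` and `h ≻_d X(d)`. -/
theorem blocking_pair_iff {n m : ℕ} (v : Fin n → Finset (Fin m) → ℤ)
    (P : Fin m → Fin n → Fin n → Prop)
    (hv : ∀ h, IsMRF (v h)) (hP : ∀ d, IsStrictTotalOrder (Fin n) (P d))
    (X : Fin m → Option (Fin n)) (hX : NonRedundant v X) :
    (∃ h S, IsBlockingPair v P X h S) ↔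
      ∃ (d : Fin m) (h : Fin n),
        v h (insert d (bundle X h)) - v h (bundle X h) = 1 ∧
        OptStrictPref P d (some h) (X d) := by
  constructor
  · rintro ⟨h, S, hS1, hS2, hS3⟩
    set B := bundle X h with hB
    have hsub : B ⊆ B ∪ S := Finset.subset_union_left
    have hmono : v h S ≤ v h (B ∪ S) :=
      mrf_mono_aux (hv h) ((B ∪ S) \ S).card S (B ∪ S) Finset.subset_union_right rfl
    have hlt : v h B < v h (B ∪ S) := lt_of_lt_of_le hS2 hmono
    obtain ⟨d, hd, hΔ⟩ :=
      mrf_exchange (hv h) ((B ∪ S) \ B).card B (B ∪ S) hsub rfl hlt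
    obtain ⟨hdC, hdB⟩ := Finset.mem_sdiff.mp hd
    have hdS : d ∈ S := by
      rcases Finset.mem_union.mp hdC with h' | h'
      · exact absurd h' hdB
      · exact h'
    rcases hS3 d hdS with hx | hx
    · exact absurd (by simp [hB, bundle, hx]) hdB
    · exact ⟨d, h, hΔ, hx⟩
  · rintro ⟨d, h, hΔ, hpref⟩
    have hdB : d ∉ bundle X h := by
      intro hmem
      have hx : X d = some h := by
        simpa [bundle] using hmem
      rw [hx] at hpref
      simp only [OptStrictPref] at hpref
      exact (hP d).toIsStrictOrder.toIrrefl.irrefl h hpref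
    refine ⟨h, insert d (bundle X h), ?_, ?_, ?_⟩
    · rw [Finset.card_insert_of_notMem hdB]
      have := hX h
      push_cast
      linarith
    · linarith
    · intro d' hd'
      rcases Finset.mem_insert.mp hd' with rfl | hmem
      · exact Or.inr hpref
      · exact Or.inl (by simpa [bundle] using hmem)
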